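/- Let p be a prime with p ≡ 1 (mod 4), let l ≥ 1, set q = p^(2^l) and r = p^(2^(l−1)), let F be a finite field with q elements, and let μ ∈ F× have multiplicative order equal to the 2-part (q−1)₂ of q − 1. Let ψ : SL₂(F) → SL₂(F) be the group automorphism obtained by applying the field automorphism x ↦ x^r of F to each matrix entry, and let S be the subgroup of SL₂(F) generated by the diagonal matrix diag(μ, μ⁻¹) and the matrix w = [[0,−1],[1,0]]. Then for every B ∈ S one has ψ(B) = B or ψ(B) = −B; consequently ψ induces the identity on the image of S in SL₂(F)/{±I}. -/

import Mathlib

open Matrix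

instance : Fact (Even (Fintype.card (Fin 2))) := ⟨⟨1, by simp⟩⟩

/-- Let `p ≡ 1 (mod 4)` be prime, `l ≥ 1`, `q = p ^ (2 ^ l)`, `r = p ^ (2 ^ (l-1))`,
`F` a finite field with `q` elements, and `μ ∈ Fˣ` of multiplicative order the
2-part of `q - 1`.  Let `ψ` be the automorphism of `SL₂(F)` applying `x ↦ x ^ r`
entrywise, and `S = ⟨diag(μ, μ⁻¹), [[0,-1],[1,0]]⟩`.  Then `ψ B = B` or
`ψ B = -B` for every `B ∈ S`. -/
theorem field_aut_acts_trivially_mod_center (p l : ℕ) (hp : p.Prime)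
    (hpmod : p % 4 = 1) (hl : 1 ≤ l) (F : Type*) [Field F] [Fintype F]
    (hF : Fintype.card F = p ^ 2 ^ l) (μ : Fˣ)
    (hμ : orderOf μ = 2 ^ (p ^ 2 ^ l - 1).factorization 2)
    (ψ : Matrix.SpecialLinearGroup (Fin 2) F ≃* Matrix.SpecialLinearGroup (Fin 2) F)
    (hψ : ∀ (B : Matrix.SpecialLinearGroup (Fin 2) F) (i j : Fin 2),
      (ψ B : Matrix (Fin 2) (Fin 2) F) i j
        = ((B : Matrix (Fin 2) (Fin 2) F) i j) ^ p ^ 2 ^ (l - 1))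
    (a w : Matrix.SpecialLinearGroup (Fin 2) F)
    (ha : (a : Matrix (Fin 2) (Fin 2) F) = !![(μ : F), 0; 0, ((μ⁻¹ : Fˣ) : F)])
    (hw : (w : Matrix (Fin 2) (Fin 2) F) = !![0, -1; 1, 0]) :
    ∀ B ∈ Subgroup.closure {a, w}, ψ B = B ∨ ψ B = -B := by
  have hp2 : p ≠ 2 := by rintro rfl; simp at hpmod
  have hpodd : Odd p := hp.odd_of_ne_two hp2
  set r := p ^ 2 ^ (l - 1) with hrdef
  have hrodd : Odd r := hpodd.pow
  have h2pos : (0:ℕ) < 2 ^ (l - 1) := Nat.pow_pos (by norm_num)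
  have hr5 : 5 ≤ r := by
    have hp5 : 5 ≤ p := by
      have := hp.two_le
      -- p % 4 = 1 and p prime, p ≥ 2 so p ≠ 2,3,4; p=1 impossible
      rcases Nat.lt_or_ge p 5 with h | h
      · interval_cases p <;> omega
      · exact h
    calc 5 ≤ p := hp5
    _ ≤ p ^ 2 ^ (l - 1) := Nat.le_self_pow h2pos.ne' p
  have hr4 : r % 4 = 1 := by
    rw [hrdef, Nat.pow_mod, hpmod, one_pow]
    rfl
  -- q = r * r
  have hq : p ^ 2 ^ l = r * r := by
    rw [hrdef, ← pow_add]
    congr 1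
    conv_lhs => rw [← Nat.sub_add_cancel hl]
    rw [pow_succ]
    ring
  have hq1 : p ^ 2 ^ l - 1 = (r - 1) * (r + 1) := by
    rw [hq]
    have key : ∀ m : ℕ, 1 ≤ m → (m - 1) * (m + 1) + 1 = m * m := by
      intro m hm
      obtain ⟨n, rfl⟩ : ∃ n, m = n + 1 := ⟨m - 1, by omega⟩
      simp only [Nat.add_sub_cancel]
      ring
    have := key r (by omega)
    omega
  -- 2-adic valuations
  have hrm1_ne : r - 1 ≠ 0 := by omega
  have hrp1_ne : r + 1 ≠ 0 := by omega
  have hv_rp1 : (r + 1).factorization 2 = 1 := by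
    obtain ⟨m, hm⟩ : ∃ m, r = 4 * m + 1 := ⟨r / 4, by omega⟩
    have h2 : r + 1 = 2 * (2 * m + 1) := by omega
    rw [h2, Nat.factorization_mul (by norm_num) (by omega)]
    have hodd : ¬ (2 ∣ (2 * m + 1)) := by omega
    simp [Nat.Prime.factorization, Nat.prime_two,
      Nat.factorization_eq_zero_of_not_dvd hodd]
  have hvsum : (p ^ 2 ^ l - 1).factorization 2 = (r - 1).factorization 2 + 1 := by
    rw [hq1, Nat.factorization_mul hrm1_ne hrp1_ne]
    simp [hv_rp1]
  set k1 := (r - 1).factorization 2 with hk1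
  -- order of μ is 2^(k1+1)
  have hord : orderOf μ = 2 ^ (k1 + 1) := by rw [hμ, hvsum]
  -- μ ^ (2*(r-1)) = 1
  have hdvd1 : orderOf μ ∣ 2 * (r - 1) := by
    rw [hord, pow_succ, mul_comm]
    exact mul_dvd_mul_left 2 (Nat.ordProj_dvd _ 2)
  have hpow1 : μ ^ (2 * (r - 1)) = 1 := orderOf_dvd_iff_pow_eq_one.mp hdvd1
  -- μ ^ (r-1) ≠ 1
  have hnd : ¬ orderOf μ ∣ (r - 1) := by
    rw [hord, hk1]
    exact Nat.pow_succ_factorization_not_dvd hrm1_ne Nat.prime_two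
  have hpow2 : μ ^ (r - 1) ≠ 1 := fun h => hnd (orderOf_dvd_iff_pow_eq_one.mpr h)
  -- hence μ^(r-1) = -1 in F
  have hx : (μ : F) ^ (r - 1) = -1 := by
    have hsq : ((μ : F) ^ (r - 1)) * ((μ : F) ^ (r - 1)) = 1 := by
      rw [← pow_add, ← two_mul, ← Units.val_pow_eq_pow_val, hpow1, Units.val_one]
    rcases mul_self_eq_one_iff.mp hsq with h | h
    · exfalso
      apply hpow2
      ext
      rw [Units.val_pow_eq_pow_val, h, Units.val_one]
    · exact h
  have hmu_r : (μ : F) ^ r = -(μ : F) := by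
    conv_lhs => rw [show r = (r - 1) + 1 by omega]
    rw [pow_succ, hx]; ring
  have hmuinv_r : ((μ⁻¹ : Fˣ) : F) ^ r = -((μ⁻¹ : Fˣ) : F) := by
    rw [Units.val_inv_eq_inv_val, inv_pow, hmu_r, inv_neg]
  have hrodd' : Odd r := hrodd
  -- ψ a = -a
  have hψa : ψ a = -a := by
    ext i j
    rw [hψ, Matrix.SpecialLinearGroup.coe_neg, ha]
    fin_cases i <;> fin_cases j <;>
      simp [hmu_r, hmuinv_r, inv_neg, zero_pow (by omega : r ≠ 0)]
  -- ψ w = w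
  have hψw : ψ w = w := by
    ext i j
    rw [hψ, hw]
    fin_cases i <;> fin_cases j <;>
      simp [hrodd'.neg_one_pow, zero_pow (by omega : r ≠ 0)]
  -- closure induction
  intro B hB
  induction hB using Subgroup.closure_induction with
  | mem x hx =>
    rcases hx with rfl | rfl
    · right; exact hψa
    · left; exact hψw
  | one => left; exact map_one ψ
  | mul x y hx hy ihx ihy =>
    rcases ihx with h1 | h1 <;> rcases ihy with h2 | h2
    · left; rw [_root_.map_mul, h1, h2]
    · right; rw [_root_.map_mul, h1, h2, mul_neg]
    · right; rw [_root_.map_mul, h1, h2, neg_mul]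
    · left; rw [_root_.map_mul, h1, h2, neg_mul_neg]
  | inv x hx ihx =>
    rcases ihx with h | h
    · left; rw [map_inv, h]
    · right; rw [map_inv, h, inv_neg]
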